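/- Let Z be a proper metric space. Then the flow space FS(Z) of generalized geodesics with metric d_FS is a proper metric space, and for every t ∈ ℝ the evaluation map FS(Z) → Z, c ↦ c(t), is uniformly continuous and proper. -/

import Mathlib

open MeasureTheory

/-- A generalized geodesic in a metric space. -/
def IsGenGeodesic {Z : Type*} [MetricSpace Z] (c : ℝ → Z) : Prop :=
  Continuous c ∧
  ∃ I : Set ℝ,
    ((∃ a b : ℝ, a ≤ b ∧ I = Set.Icc a b) ∨ (∃ a : ℝ, I = Set.Ici a) ∨
      (∃ b : ℝ, I = Set.Iic b) ∨ I = Set.univ) ∧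
    (∀ s ∈ I, ∀ t ∈ I, dist (c s) (c t) = |s - t|) ∧
    (∀ t ∉ I, ∃ ε > 0, ∀ s : ℝ, |s - t| < ε → c s = c t)

/-- The distance on the space of generalized geodesics. -/
noncomputable def dFS {Z : Type*} [MetricSpace Z] (c c' : ℝ → Z) : ℝ :=
  ∫ t : ℝ, dist (c t) (c' t) / (2 * Real.exp |t|)

open Filter Set Topology

section Aux

set_option linter.unusedSectionVars false

variable {Z : Type*} [MetricSpace Z]

lemma locConst_open {c : ℝ → Z} {U : Set ℝ} (hU : IsOpen U)
    (h : ∀ t ∈ U, ∃ ε > 0, ∀ s, |s - t| < ε → c s = c t) (P : Z → Prop) :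
    IsOpen {s : ℝ | s ∈ U ∧ P (c s)} := by
  rw [Metric.isOpen_iff]
  rintro s ⟨hsU, hsP⟩
  obtain ⟨δ, hδ, hδU⟩ := Metric.isOpen_iff.1 hU s hsU
  obtain ⟨ε, hε, hloc⟩ := h s hsU
  refine ⟨min ε δ, lt_min hε hδ, fun r hr => ?_⟩
  rw [Metric.mem_ball, Real.dist_eq] at hr
  refine ⟨hδU ?_, ?_⟩
  · rw [Metric.mem_ball, Real.dist_eq]; exact lt_of_lt_of_le hr (min_le_right _ _)
  · rw [hloc r (lt_of_lt_of_le hr (min_le_left _ _))]; exact hsP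

lemma const_left {c : ℝ → Z} (hc : Continuous c) {x : ℝ}
    (h : ∀ t, t < x → ∃ ε > 0, ∀ s, |s - t| < ε → c s = c t) :
    ∀ t, t ≤ x → c t = c x := by
  have h' : ∀ t ∈ Iio x, ∃ ε > 0, ∀ s, |s - t| < ε → c s = c t := fun t ht => h t ht
  have key : ∀ t, t < x → ∀ s, s < x → c s = c t := by
    intro t ht
    have h1 : IsOpen {s : ℝ | s ∈ Iio x ∧ c s = c t} := locConst_open isOpen_Iio h' (· = c t)
    have h2 : IsOpen {s : ℝ | s ∈ Iio x ∧ ¬ (c s = c t)} :=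
      locConst_open isOpen_Iio h' (¬ · = c t)
    have hd : Disjoint {s : ℝ | s ∈ Iio x ∧ c s = c t} {s : ℝ | s ∈ Iio x ∧ ¬ (c s = c t)} := by
      rw [Set.disjoint_left]; rintro s ⟨_, hs⟩ ⟨_, hs'⟩; exact hs' hs
    have hsub : Iio x ⊆ {s : ℝ | s ∈ Iio x ∧ c s = c t} ∪ {s : ℝ | s ∈ Iio x ∧ ¬ (c s = c t)} := by
      intro s hs; by_cases hcs : c s = c t
      · exact Or.inl ⟨hs, hcs⟩
      · exact Or.inr ⟨hs, hcs⟩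
    rcases isPreconnected_Iio.subset_or_subset h1 h2 hd hsub with hS | hS
    · exact fun s hs => (hS hs).2
    · exact absurd rfl (hS ht).2
  intro t ht
  rcases eq_or_lt_of_le ht with rfl | ht'
  · rfl
  · have h1 : Tendsto c (𝓝[<] x) (𝓝 (c x)) := (hc.tendsto x).mono_left nhdsWithin_le_nhds
    have h2 : Tendsto c (𝓝[<] x) (𝓝 (c t)) := by
      have he : ∀ᶠ s in 𝓝[<] x, c s = c t :=
        eventually_nhdsWithin_of_forall (fun s hs => key t ht' s hs)
      exact Tendsto.congr' (by filter_upwards [he] with s hs using hs.symm) tendsto_const_nhds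
    exact tendsto_nhds_unique h2 h1

lemma const_right {c : ℝ → Z} (hc : Continuous c) {x : ℝ}
    (h : ∀ t, x < t → ∃ ε > 0, ∀ s, |s - t| < ε → c s = c t) :
    ∀ t, x ≤ t → c t = c x := by
  have h' : ∀ t ∈ Ioi x, ∃ ε > 0, ∀ s, |s - t| < ε → c s = c t := fun t ht => h t ht
  have key : ∀ t, x < t → ∀ s, x < s → c s = c t := by
    intro t ht
    have h1 : IsOpen {s : ℝ | s ∈ Ioi x ∧ c s = c t} := locConst_open isOpen_Ioi h' (· = c t)
    have h2 : IsOpen {s : ℝ | s ∈ Ioi x ∧ ¬ (c s = c t)} :=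
      locConst_open isOpen_Ioi h' (¬ · = c t)
    have hd : Disjoint {s : ℝ | s ∈ Ioi x ∧ c s = c t} {s : ℝ | s ∈ Ioi x ∧ ¬ (c s = c t)} := by
      rw [Set.disjoint_left]; rintro s ⟨_, hs⟩ ⟨_, hs'⟩; exact hs' hs
    have hsub : Ioi x ⊆ {s : ℝ | s ∈ Ioi x ∧ c s = c t} ∪ {s : ℝ | s ∈ Ioi x ∧ ¬ (c s = c t)} := by
      intro s hs; by_cases hcs : c s = c t
      · exact Or.inl ⟨hs, hcs⟩
      · exact Or.inr ⟨hs, hcs⟩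
    rcases isPreconnected_Ioi.subset_or_subset h1 h2 hd hsub with hS | hS
    · exact fun s hs => (hS hs).2
    · exact absurd rfl (hS ht).2
  intro t ht
  rcases eq_or_lt_of_le ht with rfl | ht'
  · rfl
  · have h1 : Tendsto c (𝓝[>] x) (𝓝 (c x)) := (hc.tendsto x).mono_left nhdsWithin_le_nhds
    have h2 : Tendsto c (𝓝[>] x) (𝓝 (c t)) := by
      have he : ∀ᶠ s in 𝓝[>] x, c s = c t :=
        eventually_nhdsWithin_of_forall (fun s hs => key t ht' s hs)
      exact Tendsto.congr' (by filter_upwards [he] with s hs using hs.symm) tendsto_const_nhds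
    exact tendsto_nhds_unique h2 h1

lemma geod_repr {c : ℝ → Z} (h : IsGenGeodesic c) :
    ∃ a b : EReal, a ≤ b ∧
      (∀ s t : ℝ, a ≤ (s : EReal) → (s : EReal) ≤ b → a ≤ (t : EReal) → (t : EReal) ≤ b →
        dist (c s) (c t) = |s - t|) ∧
      (∀ s t : ℝ, s ≤ t → (t : EReal) ≤ a → c s = c t) ∧
      (∀ s t : ℝ, s ≤ t → b ≤ (s : EReal) → c s = c t) := by
  obtain ⟨hc, I, hI, hiso, hloc⟩ := h
  rcases hI with ⟨x, y, hxy, rfl⟩ | ⟨x, rfl⟩ | ⟨y, rfl⟩ | rfl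
  · refine ⟨(x : EReal), (y : EReal), by exact_mod_cast hxy, ?_, ?_, ?_⟩
    · intro s t hs1 hs2 ht1 ht2
      exact hiso s ⟨by exact_mod_cast hs1, by exact_mod_cast hs2⟩
        t ⟨by exact_mod_cast ht1, by exact_mod_cast ht2⟩
    · intro s t hst hta
      have hta' : t ≤ x := by exact_mod_cast hta
      have hcl := const_left hc (x := x) (fun t' ht' => hloc t' (fun hm => absurd hm.1 (not_le.2 ht')))
      rw [hcl s (hst.trans hta'), hcl t hta']
    · intro s t hst hbs
      have hbs' : y ≤ s := by exact_mod_cast hbs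
      have hcr := const_right hc (x := y) (fun t' ht' => hloc t' (fun hm => absurd hm.2 (not_le.2 ht')))
      rw [hcr s hbs', hcr t (hbs'.trans hst)]
  · refine ⟨(x : EReal), ⊤, le_top, ?_, ?_, ?_⟩
    · intro s t hs1 _ ht1 _
      exact hiso s (by exact_mod_cast hs1) t (by exact_mod_cast ht1)
    · intro s t hst hta
      have hta' : t ≤ x := by exact_mod_cast hta
      have hcl := const_left hc (x := x) (fun t' ht' => hloc t' (fun hm => absurd hm (not_le.2 ht')))
      rw [hcl s (hst.trans hta'), hcl t hta']
    · intro s t _ hbs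
      exact absurd hbs (EReal.coe_lt_top s).not_ge
  · refine ⟨⊥, (y : EReal), bot_le, ?_, ?_, ?_⟩
    · intro s t _ hs2 _ ht2
      exact hiso s (by exact_mod_cast hs2) t (by exact_mod_cast ht2)
    · intro s t _ hta
      exact absurd hta (EReal.bot_lt_coe t).not_ge
    · intro s t hst hbs
      have hbs' : y ≤ s := by exact_mod_cast hbs
      have hcr := const_right hc (x := y) (fun t' ht' => hloc t' (fun hm => absurd hm (not_le.2 ht')))
      rw [hcr s hbs', hcr t (hbs'.trans hst)]
  · refine ⟨⊥, ⊤, bot_le, ?_, ?_, ?_⟩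
    · intro s t _ _ _ _
      exact hiso s trivial t trivial
    · intro s t _ hta
      exact absurd hta (EReal.bot_lt_coe t).not_ge
    · intro s t _ hbs
      exact absurd hbs (EReal.coe_lt_top s).not_ge

lemma ereal_is_coe {a : EReal} {s t : ℝ} (h1 : (s : EReal) < a) (h2 : a < (t : EReal)) :
    ∃ x : ℝ, a = (x : EReal) :=
  ⟨a.toReal, (EReal.coe_toReal (h2.trans (EReal.coe_lt_top t)).ne
    (((EReal.bot_lt_coe s).trans h1).ne') ).symm⟩

lemma geod_dist_le {c : ℝ → Z} (h : IsGenGeodesic c) (s t : ℝ) :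
    dist (c s) (c t) ≤ |s - t| := by
  obtain ⟨a, b, hab, H1, H2, H3⟩ := geod_repr h
  have main : ∀ s t : ℝ, s ≤ t → dist (c s) (c t) ≤ |s - t| := by
    intro s t hst
    have habs : |s - t| = t - s := by rw [abs_sub_comm]; exact abs_of_nonneg (sub_nonneg.2 hst)
    by_cases h1 : (t : EReal) ≤ a
    · rw [H2 s t hst h1, dist_self]; exact abs_nonneg _
    by_cases h2 : b ≤ (s : EReal)
    · rw [H3 s t hst h2, dist_self]; exact abs_nonneg _
    push_neg at h1 h2
    by_cases h3 : a ≤ (s : EReal) <;> by_cases h4 : (t : EReal) ≤ b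
    · rw [H1 s t h3 h2.le h1.le h4]
    · push_neg at h4
      obtain ⟨y, rfl⟩ := ereal_is_coe h2 h4
      have hsy : s ≤ y := by exact_mod_cast h2.le
      have hyt : y ≤ t := by exact_mod_cast h4.le
      have e1 : c y = c t := H3 y t hyt le_rfl
      have e2 : dist (c s) (c y) = |s - y| :=
        H1 s y h3 h2.le (h3.trans (by exact_mod_cast hsy)) le_rfl
      rw [← e1, e2, habs, abs_sub_comm, abs_of_nonneg (sub_nonneg.2 hsy)]
      linarith
    · push_neg at h3
      obtain ⟨x, rfl⟩ := ereal_is_coe h3 h1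
      have hsx : s ≤ x := by exact_mod_cast h3.le
      have hxt : x ≤ t := by exact_mod_cast h1.le
      have e1 : c s = c x := H2 s x hsx le_rfl
      have e2 : dist (c x) (c t) = |x - t| := H1 x t le_rfl hab h1.le h4
      rw [e1, e2, habs, abs_sub_comm, abs_of_nonneg (sub_nonneg.2 hxt)]
      linarith
    · push_neg at h3 h4
      obtain ⟨x, rfl⟩ := ereal_is_coe h3 h1
      obtain ⟨y, rfl⟩ := ereal_is_coe h2 h4
      have hsx : s ≤ x := by exact_mod_cast h3.le
      have hyt : y ≤ t := by exact_mod_cast h4.le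
      have hxy : x ≤ y := by exact_mod_cast hab
      have e1 : c s = c x := H2 s x hsx le_rfl
      have e2 : c y = c t := H3 y t hyt le_rfl
      have e3 : dist (c x) (c y) = |x - y| := H1 x y le_rfl hab hab le_rfl
      rw [e1, ← e2, e3, habs, abs_sub_comm, abs_of_nonneg (sub_nonneg.2 hxy)]
      linarith
  rcases le_total s t with hst | hst
  · exact main s t hst
  · rw [dist_comm, abs_sub_comm]; exact main t s hst

lemma geod_const {c : ℝ → Z} (hc : Continuous c) (h : ∀ s t : ℝ, c s = c t) :
    IsGenGeodesic c := by
  refine ⟨hc, Set.Icc 0 0, Or.inl ⟨0, 0, le_rfl, rfl⟩, ?_, ?_⟩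
  · intro s hs t ht
    rw [Set.mem_Icc] at hs ht
    have hs0 : s = 0 := le_antisymm hs.2 hs.1
    have ht0 : t = 0 := le_antisymm ht.2 ht.1
    subst hs0; subst ht0; simp
  · exact fun t _ => ⟨1, one_pos, fun s _ => h s t⟩

lemma isom_extend {c : ℝ → Z} (hc : Continuous c) {S T : Set ℝ} (hT : T ⊆ closure S)
    (h : ∀ s ∈ S, ∀ t ∈ S, dist (c s) (c t) = |s - t|) :
    ∀ s ∈ T, ∀ t ∈ T, dist (c s) (c t) = |s - t| := by
  have heq : Set.EqOn (fun p : ℝ × ℝ => dist (c p.1) (c p.2))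
      (fun p : ℝ × ℝ => |p.1 - p.2|) (S ×ˢ S) := fun p hp => h _ hp.1 _ hp.2
  have hcl := heq.closure ((hc.comp continuous_fst).dist (hc.comp continuous_snd))
    ((continuous_fst.sub continuous_snd).abs)
  intro s hs t ht
  have hmem : (s, t) ∈ closure (S ×ˢ S) := by
    rw [closure_prod_eq]; exact ⟨hT hs, hT ht⟩
  exact hcl hmem

lemma geod_of_repr {c : ℝ → Z} (hc : Continuous c) (a b : EReal) (hab : a ≤ b)
    (H1 : ∀ s t : ℝ, a < (s : EReal) → (s : EReal) < b → a < (t : EReal) → (t : EReal) < b →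
      dist (c s) (c t) = |s - t|)
    (H2 : ∀ s t : ℝ, s ≤ t → (t : EReal) < a → c s = c t)
    (H3 : ∀ s t : ℝ, s ≤ t → b < (s : EReal) → c s = c t) :
    IsGenGeodesic c := by
  have H2' : ∀ s t : ℝ, (s : EReal) < a → (t : EReal) < a → c s = c t := by
    intro s t hs ht
    rcases le_total s t with h | h
    · exact H2 s t h ht
    · exact (H2 t s h hs).symm
  have H3' : ∀ s t : ℝ, b < (s : EReal) → b < (t : EReal) → c s = c t := by
    intro s t hs ht
    rcases le_total s t with h | h
    · exact H3 s t h hs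
    · exact (H3 t s h ht).symm
  by_cases hat : a = ⊤
  · exact geod_const hc (fun s t => H2' s t (hat ▸ EReal.coe_lt_top s) (hat ▸ EReal.coe_lt_top t))
  by_cases hbb : b = ⊥
  · exact geod_const hc (fun s t => H3' s t (hbb ▸ EReal.bot_lt_coe s) (hbb ▸ EReal.bot_lt_coe t))
  by_cases hab' : a = ⊥ <;> by_cases hbt : b = ⊤
  · subst hab'; subst hbt
    refine ⟨hc, Set.univ, Or.inr (Or.inr (Or.inr rfl)), ?_, ?_⟩
    · exact fun s _ t _ => H1 s t (EReal.bot_lt_coe s) (EReal.coe_lt_top s)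
        (EReal.bot_lt_coe t) (EReal.coe_lt_top t)
    · exact fun t ht => absurd trivial ht
  · -- a = ⊥, b = ↑y
    subst hab'
    obtain ⟨y, rfl⟩ : ∃ y : ℝ, b = (y : EReal) :=
      ⟨b.toReal, (EReal.coe_toReal hbt hbb).symm⟩
    refine ⟨hc, Set.Iic y, Or.inr (Or.inr (Or.inl ⟨y, rfl⟩)), ?_, ?_⟩
    · refine isom_extend hc (S := Set.Iio y) (by rw [closure_Iio]) ?_
      intro s hs t ht
      exact H1 s t (EReal.bot_lt_coe s) (by exact_mod_cast hs) (EReal.bot_lt_coe t)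
        (by exact_mod_cast ht)
    · intro t ht
      rw [Set.mem_Iic, not_le] at ht
      refine ⟨t - y, by linarith, fun s hs => ?_⟩
      have hys : y < s := by rw [abs_sub_lt_iff] at hs; linarith
      exact H3' s t (by exact_mod_cast hys) (by exact_mod_cast ht)
  · -- a = ↑x, b = ⊤
    subst hbt
    obtain ⟨x, rfl⟩ : ∃ x : ℝ, a = (x : EReal) :=
      ⟨a.toReal, (EReal.coe_toReal hat hab').symm⟩
    refine ⟨hc, Set.Ici x, Or.inr (Or.inl ⟨x, rfl⟩), ?_, ?_⟩
    · refine isom_extend hc (S := Set.Ioi x) (by rw [closure_Ioi]) ?_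
      intro s hs t ht
      exact H1 s t (by exact_mod_cast hs) (EReal.coe_lt_top s) (by exact_mod_cast ht)
        (EReal.coe_lt_top t)
    · intro t ht
      rw [Set.mem_Ici, not_le] at ht
      refine ⟨x - t, by linarith, fun s hs => ?_⟩
      have hsx : s < x := by rw [abs_sub_lt_iff] at hs; linarith
      exact H2' s t (by exact_mod_cast hsx) (by exact_mod_cast ht)
  · -- a = ↑x, b = ↑y
    obtain ⟨x, rfl⟩ : ∃ x : ℝ, a = (x : EReal) :=
      ⟨a.toReal, (EReal.coe_toReal hat hab').symm⟩
    obtain ⟨y, rfl⟩ : ∃ y : ℝ, b = (y : EReal) :=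
      ⟨b.toReal, (EReal.coe_toReal hbt hbb).symm⟩
    have hxy : x ≤ y := by exact_mod_cast hab
    refine ⟨hc, Set.Icc x y, Or.inl ⟨x, y, hxy, rfl⟩, ?_, ?_⟩
    · rcases eq_or_lt_of_le hxy with rfl | hlt
      · intro s hs t ht
        rw [Set.mem_Icc] at hs ht
        have hs0 : s = x := le_antisymm hs.2 hs.1
        have ht0 : t = x := le_antisymm ht.2 ht.1
        subst hs0; subst ht0; simp
      · refine isom_extend hc (S := Set.Ioo x y) (by rw [closure_Ioo hlt.ne]) ?_
        intro s hs t ht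
        rw [Set.mem_Ioo] at hs ht
        exact H1 s t (by exact_mod_cast hs.1) (by exact_mod_cast hs.2)
          (by exact_mod_cast ht.1) (by exact_mod_cast ht.2)
    · intro t ht
      rw [Set.mem_Icc, not_and_or, not_le, not_le] at ht
      rcases ht with ht | ht
      · refine ⟨x - t, by linarith, fun s hs => ?_⟩
        have hsx : s < x := by rw [abs_sub_lt_iff] at hs; linarith
        exact H2' s t (by exact_mod_cast hsx) (by exact_mod_cast ht)
      · refine ⟨t - y, by linarith, fun s hs => ?_⟩
        have hys : y < s := by rw [abs_sub_lt_iff] at hs; linarith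
        exact H3' s t (by exact_mod_cast hys) (by exact_mod_cast ht)

lemma integrable_bound (A B : ℝ) :
    Integrable (fun s : ℝ => (A + B * |s|) * Real.exp (-|s|)) := by
  have h1 : IntegrableOn (fun x : ℝ => Real.exp (-1 * x)) (Ioi 0) :=
    exp_neg_integrableOn_Ioi 0 one_pos
  have h2 : IntegrableOn (fun x : ℝ => Real.exp (-x) * x) (Ioi 0) := by
    have h := Real.GammaIntegral_convergent (s := 2) (by norm_num)
    simp only [show (2:ℝ) - 1 = 1 by norm_num, Real.rpow_one] at h
    exact h
  have hIoi : IntegrableOn (fun x : ℝ => (A + B * |x|) * Real.exp (-|x|)) (Ioi 0) := by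
    have hg : IntegrableOn (fun x : ℝ => A * Real.exp (-1 * x) + B * (Real.exp (-x) * x))
        (Ioi 0) := (h1.const_mul A).add (h2.const_mul B)
    refine (integrableOn_congr_fun ?_ measurableSet_Ioi).mpr hg
    intro x hx
    rw [mem_Ioi] at hx
    simp only [abs_of_pos hx, neg_one_mul]
    ring
  have hIic : IntegrableOn (fun x : ℝ => (A + B * |x|) * Real.exp (-|x|)) (Iic 0) := by
    rw [← Measure.map_neg_eq_self (volume : Measure ℝ)]
    have m : MeasurableEmbedding (fun x : ℝ => -x) := (Homeomorph.neg ℝ).measurableEmbedding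
    rw [m.integrableOn_map_iff]
    simp_rw [Function.comp_def, abs_neg, neg_preimage, neg_Iic, neg_zero]
    exact Iff.mpr integrableOn_Ici_iff_integrableOn_Ioi hIoi
  have := hIic.union hIoi
  rwa [Iic_union_Ioi, integrableOn_univ] at this

lemma integrable_weight (A B : ℝ) :
    Integrable (fun s : ℝ => (A + B * |s|) / (2 * Real.exp |s|)) := by
  have h := (integrable_bound A B).const_mul (1/2)
  refine h.congr (Eventually.of_forall fun s => ?_)
  have hne : Real.exp |s| ≠ 0 := (Real.exp_pos _).ne'
  simp only [Real.exp_neg]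
  field_simp

lemma meas_integrand {c c' : ℝ → Z} (hc : Continuous c) (hc' : Continuous c') :
    Continuous (fun s : ℝ => dist (c s) (c' s) / (2 * Real.exp |s|)) := by
  refine (hc.dist hc').div (continuous_const.mul (Real.continuous_exp.comp continuous_abs)) ?_
  intro s
  positivity

lemma dFS_integrable {c c' : ℝ → Z} (hc : Continuous c) (hc' : Continuous c')
    (hl : ∀ s t, dist (c s) (c t) ≤ |s - t|) (hl' : ∀ s t, dist (c' s) (c' t) ≤ |s - t|) :
    Integrable (fun s : ℝ => dist (c s) (c' s) / (2 * Real.exp |s|)) := by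
  refine (integrable_weight (dist (c 0) (c' 0)) 2).mono'
    (meas_integrand hc hc').aestronglyMeasurable (Eventually.of_forall fun s => ?_)
  have h1 : dist (c s) (c' s) ≤ dist (c 0) (c' 0) + 2 * |s| := by
    have t1 := dist_triangle4 (c s) (c 0) (c' 0) (c' s)
    have t2 := hl s 0
    have t3 := hl' 0 s
    simp only [sub_zero, zero_sub, abs_neg] at t2 t3
    linarith
  rw [Real.norm_eq_abs, abs_of_nonneg (by positivity)]
  have hd : (0:ℝ) < 2 * Real.exp |s| := by positivity
  exact div_le_div_of_nonneg_right h1 hd.le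

lemma dFS_nonneg {c c' : ℝ → Z} : 0 ≤ dFS c c' :=
  integral_nonneg fun s => div_nonneg dist_nonneg (by positivity)

lemma dFS_comm (c c' : ℝ → Z) : dFS c c' = dFS c' c := by
  unfold dFS
  congr 1
  funext s
  rw [dist_comm]

lemma dFS_triangle {c₁ c₂ c₃ : ℝ → Z}
    (h12 : Integrable (fun s : ℝ => dist (c₁ s) (c₂ s) / (2 * Real.exp |s|)))
    (h23 : Integrable (fun s : ℝ => dist (c₂ s) (c₃ s) / (2 * Real.exp |s|)))
    (h13 : Integrable (fun s : ℝ => dist (c₁ s) (c₃ s) / (2 * Real.exp |s|))) :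
    dFS c₁ c₃ ≤ dFS c₁ c₂ + dFS c₂ c₃ := by
  unfold dFS
  rw [← integral_add h12 h23]
  refine integral_mono h13 (h12.add h23) fun s => ?_
  have hd : (0:ℝ) < 2 * Real.exp |s| := by positivity
  rw [← add_div]
  exact div_le_div_of_nonneg_right (dist_triangle _ _ _) hd.le

lemma dFS_lower {c c' : ℝ → Z}
    (hl : ∀ s t, dist (c s) (c t) ≤ |s - t|) (hl' : ∀ s t, dist (c' s) (c' t) ≤ |s - t|)
    (hint : Integrable (fun s : ℝ => dist (c s) (c' s) / (2 * Real.exp |s|)))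
    (t ε : ℝ) (hε : 0 < ε) (hd : ε ≤ dist (c t) (c' t)) :
    min (ε / 4) 1 * ε / (2 * Real.exp (|t| + 1)) ≤ dFS c c' := by
  set r := min (ε / 4) 1 with hr_def
  have hr : 0 < r := lt_min (by linarith) one_pos
  have hr1 : r ≤ 1 := min_le_right _ _
  have hr4 : r ≤ ε / 4 := min_le_left _ _
  set m := (ε / 2) / (2 * Real.exp (|t| + 1)) with hm_def
  have key : ∀ s ∈ Icc (t - r) (t + r), m ≤ dist (c s) (c' s) / (2 * Real.exp |s|) := by
    intro s hs
    rw [mem_Icc] at hs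
    have hst : |s - t| ≤ r := abs_sub_le_iff.2 ⟨by linarith, by linarith⟩
    have h1 : ε / 2 ≤ dist (c s) (c' s) := by
      have t1 := dist_triangle4 (c t) (c s) (c' s) (c' t)
      have t2 := hl t s
      have t3 := hl' s t
      rw [abs_sub_comm] at t2
      linarith [abs_nonneg (s - t)]
    have h2 : |s| ≤ |t| + 1 := by
      have : |s| ≤ |t| + |s - t| := by
        calc |s| = |t + (s - t)| := by ring_nf
        _ ≤ |t| + |s - t| := abs_add_le _ _
      linarith
    have h3 : 2 * Real.exp |s| ≤ 2 * Real.exp (|t| + 1) := by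
      have := Real.exp_le_exp.2 h2
      linarith
    exact div_le_div₀ (dist_nonneg) h1 (by positivity) h3
  have hIcc : m * (volume (Icc (t - r) (t + r))).toReal ≤
      ∫ s in Icc (t - r) (t + r), dist (c s) (c' s) / (2 * Real.exp |s|) :=
    setIntegral_ge_of_const_le_real measurableSet_Icc
      (by rw [Real.volume_Icc]; exact ENNReal.ofReal_ne_top)
      key hint.integrableOn
  have hvol : (volume (Icc (t - r) (t + r))).toReal = 2 * r := by
    rw [Real.volume_Icc, ENNReal.toReal_ofReal (by linarith)]
    ring
  have hle : ∫ s in Icc (t - r) (t + r), dist (c s) (c' s) / (2 * Real.exp |s|) ≤ dFS c c' :=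
    setIntegral_le_integral hint (Eventually.of_forall fun s => div_nonneg dist_nonneg (by positivity))
  rw [hvol] at hIcc
  have : r * ε / (2 * Real.exp (|t| + 1)) = m * (2 * r) := by
    rw [hm_def]
    field_simp
  rw [this]
  exact hIcc.trans hle

lemma dFS_tendsto_zero {u : ℕ → ℝ → Z} {c : ℝ → Z}
    (hu : ∀ n, Continuous (u n)) (hc : Continuous c)
    (hul : ∀ n s t, dist (u n s) (u n t) ≤ |s - t|)
    (hcl : ∀ s t, dist (c s) (c t) ≤ |s - t|)
    (M : ℝ) (hM : ∀ n, dist (u n 0) (c 0) ≤ M)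
    (hconv : ∀ s, Filter.Tendsto (fun n => u n s) Filter.atTop (nhds (c s))) :
    Filter.Tendsto (fun n => dFS (u n) c) Filter.atTop (nhds 0) := by
  have hb : ∀ n, ∀ᵐ s : ℝ, ‖dist (u n s) (c s) / (2 * Real.exp |s|)‖ ≤
      (M + 2 * |s|) / (2 * Real.exp |s|) := by
    intro n
    refine Eventually.of_forall fun s => ?_
    have h1 : dist (u n s) (c s) ≤ M + 2 * |s| := by
      have t1 := dist_triangle4 (u n s) (u n 0) (c 0) (c s)
      have t2 := hul n s 0
      have t3 := hcl 0 s
      have t4 := hM n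
      simp only [sub_zero, zero_sub, abs_neg] at t2 t3
      linarith
    rw [Real.norm_eq_abs, abs_of_nonneg (by positivity)]
    exact div_le_div_of_nonneg_right h1 (by positivity)
  have hptw : ∀ᵐ s : ℝ, Filter.Tendsto (fun n => dist (u n s) (c s) / (2 * Real.exp |s|))
      Filter.atTop (nhds ((fun _ => (0:ℝ)) s)) := by
    refine Eventually.of_forall fun s => ?_
    have h1 : Filter.Tendsto (fun n => dist (u n s) (c s)) Filter.atTop (nhds 0) := by
      have := (hconv s).dist (tendsto_const_nhds (x := c s))
      rwa [dist_self] at this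
    simpa using h1.div_const (2 * Real.exp |s|)
  have := tendsto_integral_of_dominated_convergence (μ := volume)
    (F := fun n s => dist (u n s) (c s) / (2 * Real.exp |s|)) (f := fun _ => (0:ℝ))
    (fun s => (M + 2 * |s|) / (2 * Real.exp |s|))
    (fun n => (meas_integrand (hu n) hc).aestronglyMeasurable)
    (integrable_weight M 2) hb hptw
  simpa [dFS] using this

lemma geod_extract [ProperSpace Z] {u : ℕ → ℝ → Z} (hu : ∀ n, IsGenGeodesic (u n))
    (z₀ : Z) (R : ℝ) (hR : ∀ n, dist (u n 0) z₀ ≤ R) :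
    ∃ c : ℝ → Z, IsGenGeodesic c ∧ ∃ φ : ℕ → ℕ, StrictMono φ ∧
      ∀ s : ℝ, Tendsto (fun n => u (φ n) s) atTop (𝓝 (c s)) := by
  have hlip : ∀ n s t, dist (u n s) (u n t) ≤ |s - t| := fun n => geod_dist_le (hu n)
  -- Step 1: subsequence converging pointwise on ℚ
  set B : ℚ → Set Z := fun q => Metric.closedBall z₀ (R + |(q : ℝ)|) with hB_def
  have hBc : ∀ q, IsCompact (B q) := fun q => isCompact_closedBall _ _
  have hmem : ∀ n, (fun q : ℚ => u n (q : ℝ)) ∈ Set.pi univ B := by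
    intro n q _
    rw [hB_def, Metric.mem_closedBall]
    have t1 := dist_triangle (u n (q : ℝ)) (u n 0) z₀
    have t2 := hlip n (q : ℝ) 0
    rw [sub_zero] at t2
    linarith [hR n]
  obtain ⟨g, -, φ, hφ, hgconv⟩ := ((isCompact_univ_pi hBc).isSeqCompact) hmem
  have hconvq : ∀ q : ℚ, Tendsto (fun n => u (φ n) (q : ℝ)) atTop (𝓝 (g q)) :=
    fun q => tendsto_pi_nhds.1 hgconv q
  -- Step 2: Cauchy at every real point
  have hcauchy : ∀ t : ℝ, CauchySeq (fun n => u (φ n) t) := by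
    intro t
    rw [Metric.cauchySeq_iff]
    intro ε hε
    obtain ⟨q, hq⟩ := exists_rat_near t (show (0:ℝ) < ε / 8 by linarith)
    have hcq := (hconvq q).cauchySeq
    rw [Metric.cauchySeq_iff] at hcq
    obtain ⟨N, hN⟩ := hcq (ε / 2) (by linarith)
    refine ⟨N, fun m hm n hn => ?_⟩
    have t1 := dist_triangle4 (u (φ m) t) (u (φ m) (q : ℝ)) (u (φ n) (q : ℝ)) (u (φ n) t)
    have t2 := hlip (φ m) t (q : ℝ)
    have t3 := hlip (φ n) (q : ℝ) t
    have t4 := hN m hm n hn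
    rw [abs_sub_comm (q : ℝ) t] at t3
    linarith
  have hlim : ∀ t : ℝ, ∃ z : Z, Tendsto (fun n => u (φ n) t) atTop (𝓝 z) :=
    fun t => cauchySeq_tendsto_of_complete (hcauchy t)
  choose c hc using hlim
  -- Step 3: c is 1-Lipschitz
  have hclip : ∀ s t, dist (c s) (c t) ≤ |s - t| := by
    intro s t
    exact le_of_tendsto ((hc s).dist (hc t)) (Eventually.of_forall fun n => hlip (φ n) s t)
  have hccont : Continuous c := by
    refine LipschitzWith.continuous (K := 1) ?_
    rw [lipschitzWith_iff_dist_le_mul]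
    intro s t
    rw [NNReal.coe_one, one_mul, Real.dist_eq]
    exact hclip s t
  -- Step 4: extract convergent endpoints
  have hrepr := fun n => geod_repr (hu (φ n))
  choose A B' hAB H1 H2 H3 using hrepr
  have hcpt : IsSeqCompact (univ : Set (EReal × EReal)) := isCompact_univ.isSeqCompact
  obtain ⟨p, -, ψ, hψ, hpconv⟩ := hcpt (x := fun n => (A n, B' n)) (fun _ => trivial)
  have hA : Tendsto (fun n => A (ψ n)) atTop (𝓝 p.1) :=
    (continuous_fst.tendsto p).comp hpconv
  have hB : Tendsto (fun n => B' (ψ n)) atTop (𝓝 p.2) :=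
    (continuous_snd.tendsto p).comp hpconv
  have hαβ : p.1 ≤ p.2 := le_of_tendsto_of_tendsto' hA hB (fun n => hAB (ψ n))
  have hcΦ : ∀ t, Tendsto (fun n => u (φ (ψ n)) t) atTop (𝓝 (c t)) :=
    fun t => (hc t).comp hψ.tendsto_atTop
  -- Step 5: limit is a generalized geodesic
  have hgeod : IsGenGeodesic c := by
    refine geod_of_repr hccont p.1 p.2 hαβ ?_ ?_ ?_
    · intro s t hs1 hs2 ht1 ht2
      have e1 : ∀ᶠ n in atTop, A (ψ n) < (s : EReal) := hA.eventually_lt_const hs1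
      have e2 : ∀ᶠ n in atTop, (s : EReal) < B' (ψ n) := hB.eventually_const_lt hs2
      have e3 : ∀ᶠ n in atTop, A (ψ n) < (t : EReal) := hA.eventually_lt_const ht1
      have e4 : ∀ᶠ n in atTop, (t : EReal) < B' (ψ n) := hB.eventually_const_lt ht2
      have heq : ∀ᶠ n in atTop, dist (u (φ (ψ n)) s) (u (φ (ψ n)) t) = |s - t| := by
        filter_upwards [e1, e2, e3, e4] with n h1 h2 h3 h4
        exact H1 (ψ n) s t h1.le h2.le h3.le h4.le
      have hten : Tendsto (fun n => dist (u (φ (ψ n)) s) (u (φ (ψ n)) t)) atTop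
          (𝓝 (dist (c s) (c t))) := (hcΦ s).dist (hcΦ t)
      have hten' : Tendsto (fun n => dist (u (φ (ψ n)) s) (u (φ (ψ n)) t)) atTop
          (𝓝 (|s - t|)) :=
        Tendsto.congr' (by filter_upwards [heq] with n hn using hn.symm) tendsto_const_nhds
      exact tendsto_nhds_unique hten hten'
    · intro s t hst hta
      have e1 : ∀ᶠ n in atTop, (t : EReal) < A (ψ n) := hA.eventually_const_lt hta
      have heq : ∀ᶠ n in atTop, u (φ (ψ n)) s = u (φ (ψ n)) t := by
        filter_upwards [e1] with n h1
        exact H2 (ψ n) s t hst h1.le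
      refine tendsto_nhds_unique (hcΦ s) (Tendsto.congr' ?_ (hcΦ t))
      filter_upwards [heq] with n hn using hn.symm
    · intro s t hst hbs
      have e1 : ∀ᶠ n in atTop, B' (ψ n) < (s : EReal) := hB.eventually_lt_const hbs
      have heq : ∀ᶠ n in atTop, u (φ (ψ n)) s = u (φ (ψ n)) t := by
        filter_upwards [e1] with n h1
        exact H3 (ψ n) s t hst h1.le
      refine tendsto_nhds_unique (hcΦ s) (Tendsto.congr' ?_ (hcΦ t))
      filter_upwards [heq] with n hn using hn.symm
  exact ⟨c, hgeod, φ ∘ ψ, hφ.comp hψ, fun s => hcΦ s⟩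

end Aux

/-- For a proper metric space `Z` the flow space `FS(Z)` is proper (closed `dFS`-balls
are sequentially compact for `dFS`), and each evaluation map `c ↦ c(t)` is uniformly
continuous and proper. -/
theorem flow_space_proper {Z : Type*} [MetricSpace Z] [ProperSpace Z] :
    (∀ c₀ : ℝ → Z, IsGenGeodesic c₀ → ∀ r : ℝ, ∀ u : ℕ → ℝ → Z,
      (∀ n, IsGenGeodesic (u n)) → (∀ n, dFS (u n) c₀ ≤ r) →
      ∃ c : ℝ → Z, IsGenGeodesic c ∧ dFS c c₀ ≤ r ∧
        ∃ φ : ℕ → ℕ, StrictMono φ ∧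
          Filter.Tendsto (fun n => dFS (u (φ n)) c) Filter.atTop (nhds 0)) ∧
    (∀ t : ℝ, ∀ ε > 0, ∃ δ > 0, ∀ c c' : ℝ → Z, IsGenGeodesic c → IsGenGeodesic c' →
      dFS c c' < δ → dist (c t) (c' t) < ε) ∧
    (∀ t : ℝ, ∀ K : Set Z, IsCompact K → ∀ u : ℕ → ℝ → Z,
      (∀ n, IsGenGeodesic (u n)) → (∀ n, u n t ∈ K) →
      ∃ c : ℝ → Z, IsGenGeodesic c ∧ c t ∈ K ∧
        ∃ φ : ℕ → ℕ, StrictMono φ ∧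
          Filter.Tendsto (fun n => dFS (u (φ n)) c) Filter.atTop (nhds 0)) := by
  have dint : ∀ {c c' : ℝ → Z}, IsGenGeodesic c → IsGenGeodesic c' →
      Integrable (fun s : ℝ => dist (c s) (c' s) / (2 * Real.exp |s|)) :=
    fun hc hc' => dFS_integrable hc.1 hc'.1 (geod_dist_le hc) (geod_dist_le hc')
  refine ⟨?_, ?_, ?_⟩
  · -- properness of closed balls
    intro c₀ hc₀ r u hu hdr
    set M := max 4 (2 * Real.exp 1 * r) with hM_def
    have hbound : ∀ n, dist (u n 0) (c₀ 0) ≤ M := by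
      intro n
      by_contra hcon
      push_neg at hcon
      have hM4 : (4:ℝ) ≤ M := le_max_left _ _
      have hd : (0:ℝ) < dist (u n 0) (c₀ 0) := by linarith
      have hlow := dFS_lower (geod_dist_le (hu n)) (geod_dist_le hc₀) (dint (hu n) hc₀)
        0 (dist (u n 0) (c₀ 0)) hd le_rfl
      have hmin : min (dist (u n 0) (c₀ 0) / 4) 1 = 1 := min_eq_right (by linarith)
      rw [hmin, one_mul, abs_zero, zero_add] at hlow
      have h1 := hlow.trans (hdr n)
      rw [div_le_iff₀ (by positivity)] at h1
      have h2 : dist (u n 0) (c₀ 0) ≤ 2 * Real.exp 1 * r := by linarith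
      have h3 := h2.trans (le_max_right 4 (2 * Real.exp 1 * r))
      linarith
    obtain ⟨c, hcgeod, φ, hφ, hconv⟩ := geod_extract hu (c₀ 0) M hbound
    have hc0 : dist (c 0) (c₀ 0) ≤ M :=
      le_of_tendsto ((hconv 0).dist (tendsto_const_nhds (x := c₀ 0)))
        (Eventually.of_forall fun n => hbound (φ n))
    have hdten : Tendsto (fun n => dFS (u (φ n)) c) atTop (𝓝 0) := by
      refine dFS_tendsto_zero (fun n => (hu (φ n)).1) hcgeod.1
        (fun n => geod_dist_le (hu (φ n))) (geod_dist_le hcgeod) (2 * M) ?_ hconv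
      intro n
      have t1 := dist_triangle (u (φ n) 0) (c₀ 0) (c 0)
      have t2 : dist (c₀ 0) (c 0) ≤ M := by rw [dist_comm]; exact hc0
      linarith [hbound (φ n)]
    refine ⟨c, hcgeod, ?_, φ, hφ, hdten⟩
    have htri : ∀ n, dFS c c₀ ≤ dFS (u (φ n)) c + r := by
      intro n
      have h1 : dFS c c₀ ≤ dFS c (u (φ n)) + dFS (u (φ n)) c₀ :=
        dFS_triangle (dint hcgeod (hu (φ n))) (dint (hu (φ n)) hc₀) (dint hcgeod hc₀)
      rw [dFS_comm c (u (φ n))] at h1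
      linarith [hdr (φ n)]
    have hfin : Tendsto (fun n => dFS (u (φ n)) c + r) atTop (𝓝 (0 + r)) :=
      hdten.add_const r
    rw [zero_add] at hfin
    exact ge_of_tendsto hfin (Eventually.of_forall htri)
  · -- uniform continuity of evaluation
    intro t ε hε
    refine ⟨min (ε / 4) 1 * ε / (2 * Real.exp (|t| + 1)),
      div_pos (mul_pos (lt_min (by linarith) one_pos) hε) (by positivity), ?_⟩
    intro c c' hc hc' hlt
    by_contra hcon
    push_neg at hcon
    have := dFS_lower (geod_dist_le hc) (geod_dist_le hc') (dint hc hc') t ε hε hcon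
    linarith
  · -- properness of evaluation
    intro t K hK u hu hmem
    set z₀ := u 0 t with hz₀
    obtain ⟨R₀, hR₀⟩ := hK.isBounded.subset_closedBall z₀
    have hR : ∀ n, dist (u n 0) z₀ ≤ |t| + R₀ := by
      intro n
      have t1 := dist_triangle (u n 0) (u n t) z₀
      have t2 := geod_dist_le (hu n) 0 t
      have t3 : dist (u n t) z₀ ≤ R₀ := hR₀ (hmem n)
      rw [zero_sub, abs_neg] at t2
      linarith
    obtain ⟨c, hcgeod, φ, hφ, hconv⟩ := geod_extract hu z₀ (|t| + R₀) hR
    have hct : c t ∈ K := hK.isClosed.mem_of_tendsto (hconv t)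
      (Eventually.of_forall fun n => hmem (φ n))
    refine ⟨c, hcgeod, hct, φ, hφ, ?_⟩
    have hc0 : dist (c 0) z₀ ≤ |t| + R₀ :=
      le_of_tendsto ((hconv 0).dist (tendsto_const_nhds (x := z₀)))
        (Eventually.of_forall fun n => hR (φ n))
    refine dFS_tendsto_zero (fun n => (hu (φ n)).1) hcgeod.1
      (fun n => geod_dist_le (hu (φ n))) (geod_dist_le hcgeod) (2 * (|t| + R₀)) ?_ hconv
    intro n
    have t1 := dist_triangle (u (φ n) 0) z₀ (c 0)
    have t2 : dist z₀ (c 0) ≤ |t| + R₀ := by rw [dist_comm]; exact hc0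
    linarith [hR (φ n)]
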